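/- Let p be a prime with p ≡ 1 (mod 4), and let d be an odd integer with d ≥ 2 and gcd(d, p−1) = 1, so that π(x) = x^d is a permutation of ℤ/pℤ. Then π is an odd permutation (its sign is −1) if and only if d ≡ 3 (mod 4). -/

import Mathlib

open Equiv Finset

private lemma negOnePow_mod_two (a : ℕ) : ((-1 : ℤˣ)) ^ a = (-1) ^ (a % 2) := by
  conv_lhs => rw [← Nat.div_add_mod a 2]
  rw [pow_add, pow_mul]
  simp

private lemma sum_val_zmod {M : Type*} [AddCommMonoid M] (n : ℕ) [NeZero n] (f : ℕ → M) :
    ∑ y : ZMod n, f y.val = ∑ v ∈ Finset.range n, f v := by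
  refine Finset.sum_bij' (fun (y : ZMod n) _ => y.val) (fun v _ => (v : ZMod n)) ?_ ?_ ?_ ?_ ?_
  · intro a _; exact Finset.mem_range.2 (ZMod.val_lt a)
  · intro b _; exact Finset.mem_univ _
  · intro a _; exact ZMod.natCast_rightInverse a
  · intro b hb; exact ZMod.val_cast_of_lt (Finset.mem_range.1 hb)
  · intro a _; rfl

private lemma key (N n d : ℕ) [NeZero N] (hN : N = 2 * n) (hn2 : n % 2 = 0) (hn0 : 0 < n)
    (hd2 : d % 2 = 1) (hgcd : Nat.gcd d N = 1)
    (σ : Equiv.Perm (ZMod N)) (hσ : ∀ x, σ x = (d : ZMod N) * x) :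
    Equiv.Perm.sign σ = -1 ↔ d % 4 = 3 := by
  subst hN
  haveI : NeZero n := ⟨hn0.ne'⟩
  haveI : NeZero (2 * n) := ⟨by omega⟩
  have hgcdn : Nat.Coprime d n :=
    Nat.Coprime.coprime_dvd_right ⟨2, by ring⟩ hgcd
  set u : (ZMod n)ˣ := ZMod.unitOfCoprime d hgcdn with hu
  set σn : Equiv.Perm (ZMod n) := Units.mulLeft u with hσn'
  have hσn : ∀ x, σn x = (d : ZMod n) * x := by
    intro x
    simp [hσn', hu, ZMod.coe_unitOfCoprime]
  set c : ZMod n → ZMod 2 := fun y => ((d * y.val / n : ℕ) : ZMod 2) with hc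
  have hcast2n : ∀ a : ℕ, ((a : ZMod (2*n))).val = a % (2*n) := fun a => ZMod.val_natCast _ a
  set E : ZMod n × ZMod 2 ≃ ZMod (2*n) :=
    { toFun := fun x => ((x.1.val + n * x.2.val : ℕ) : ZMod (2*n))
      invFun := fun z => (((z.val : ℕ) : ZMod n), ((z.val / n : ℕ) : ZMod 2))
      left_inv := by
        rintro ⟨y, ε⟩
        have hy := ZMod.val_lt y
        have hε := ZMod.val_lt ε
        have hle : n * ε.val ≤ n * 1 := Nat.mul_le_mul_left n (by omega)
        have hlt : y.val + n * ε.val < 2 * n := by omega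
        have hval : ((y.val + n * ε.val : ℕ) : ZMod (2*n)).val = y.val + n * ε.val := by
          rw [hcast2n]; exact Nat.mod_eq_of_lt hlt
        refine Prod.ext ?_ ?_
        · show ((((y.val + n * ε.val : ℕ) : ZMod (2*n)).val : ℕ) : ZMod n) = y
          rw [hval]
          push_cast
          simp [ZMod.natCast_self, ZMod.natCast_val, ZMod.cast_id]
        · show ((((y.val + n * ε.val : ℕ) : ZMod (2*n)).val / n : ℕ) : ZMod 2) = ε
          rw [hval]
          have h : (y.val + n * ε.val) / n = ε.val := by
            rw [Nat.add_mul_div_left _ _ hn0, Nat.div_eq_of_lt hy, Nat.zero_add]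
          rw [h]
          simp [ZMod.natCast_val, ZMod.cast_id]
      right_inv := by
        intro z
        have hz := ZMod.val_lt z
        have h1 : ((z.val : ℕ) : ZMod n).val = z.val % n := ZMod.val_natCast _ _
        have h2 : ((z.val / n : ℕ) : ZMod 2).val = (z.val / n) % 2 := ZMod.val_natCast _ _
        show ((((z.val : ℕ) : ZMod n).val + n * ((z.val / n : ℕ) : ZMod 2).val : ℕ) : ZMod (2*n)) = z
        rw [h1, h2]
        have hdiv : z.val / n < 2 := Nat.div_lt_of_lt_mul (by omega)
        have h3 : z.val % n + n * (z.val / n % 2) = z.val := by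
          rw [Nat.mod_eq_of_lt hdiv, Nat.mod_add_div]
        rw [h3]
        exact ZMod.natCast_rightInverse z } with hE
  have hsign : Equiv.Perm.sign (E.symm.permCongr σ) = Equiv.Perm.sign σ :=
    Equiv.Perm.sign_permCongr E.symm σ
  have hd1 : ((d : ℕ) : ZMod 2) = 1 := by
    rw [← ZMod.natCast_mod d 2, hd2, Nat.cast_one]
  have hτ : E.symm.permCongr σ =
      (Equiv.prodCongrRight (fun y => Equiv.addLeft (c y))).trans
        (Equiv.prodCongrLeft (fun _ => σn)) := by
    apply Equiv.ext
    rintro ⟨y, ε⟩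
    have hy := ZMod.val_lt y
    have hε := ZMod.val_lt ε
    set w : ℕ := d * (y.val + n * ε.val) with hw
    have hσE : σ (E (y, ε)) = ((w : ℕ) : ZMod (2*n)) := by
      show σ (((y.val + n * ε.val : ℕ) : ZMod (2*n))) = _
      rw [hσ]
      push_cast [hw]
      ring
    have hlhs : (E.symm.permCongr σ) (y, ε) =
        ((((w : ZMod (2*n))).val : ZMod n), ((((w : ZMod (2*n))).val / n : ℕ) : ZMod 2)) := by
      simp only [Equiv.permCongr_apply, Equiv.symm_symm, hσE]
      rfl
    rw [hlhs]
    have hrhs : ((Equiv.prodCongrRight (fun y => Equiv.addLeft (c y))).trans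
        (Equiv.prodCongrLeft (fun _ => σn))) (y, ε) = (σn y, c y + ε) := by
      simp [Equiv.prodCongrRight_apply, Equiv.prodCongrLeft_apply]
    rw [hrhs]
    rw [hcast2n w]
    refine Prod.ext ?_ ?_
    · show ((w % (2*n) : ℕ) : ZMod n) = σn y
      have hmod : ((w % (2*n) : ℕ) : ZMod n) = ((w : ℕ) : ZMod n) := by
        conv_rhs => rw [← Nat.div_add_mod w (2*n)]
        push_cast
        simp [ZMod.natCast_self]
      rw [hmod, hσn, hw]
      push_cast
      simp [ZMod.natCast_self, ZMod.natCast_val, ZMod.cast_id]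
    · show ((w % (2*n) / n : ℕ) : ZMod 2) = c y + ε
      have h1 : w / n = 2 * (w / (2*n)) + (w % (2*n))/n := by
        conv_lhs => rw [← Nat.div_add_mod w (2*n)]
        rw [show 2*n*(w/(2*n)) = n*(2*(w/(2*n))) by ring, Nat.mul_add_div hn0]
      have h2 : w / n = d * ε.val + d * y.val / n := by
        rw [show w = d * y.val + n * (d * ε.val) by rw [hw]; ring,
          Nat.add_mul_div_left _ _ hn0]
        exact Nat.add_comm _ _
      have h3 : ((w / n : ℕ) : ZMod 2) = ((w % (2*n) / n : ℕ) : ZMod 2) := by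
        rw [h1]
        push_cast
        rw [show (2 : ZMod 2) = 0 from by decide]
        ring
      rw [← h3, h2]
      push_cast [hd1]
      simp [hc, ZMod.natCast_val, ZMod.cast_id]
      ring
  have haddsign : ∀ v : ZMod 2, Equiv.Perm.sign (Equiv.addLeft v) = (-1:ℤˣ) ^ v.val := by
    decide
  -- compute the sign
  set T : ℕ := ∑ v ∈ Finset.range n, d * v / n with hT
  have hsignτ : Equiv.Perm.sign σ = (-1 : ℤˣ) ^ T := by
    rw [← hsign, hτ]
    have : Equiv.Perm.sign ((Equiv.prodCongrRight (fun y => Equiv.addLeft (c y))).trans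
        (Equiv.prodCongrLeft (fun _ => σn))) =
        Equiv.Perm.sign (Equiv.prodCongrLeft (fun _ : ZMod 2 => σn)) *
        Equiv.Perm.sign (Equiv.prodCongrRight (fun y => Equiv.addLeft (c y))) := by
      rw [← Equiv.Perm.sign_mul]
      rfl
    rw [this, Equiv.Perm.sign_prodCongrLeft, Equiv.Perm.sign_prodCongrRight]
    have hL : (∏ _k : ZMod 2, Equiv.Perm.sign σn) = 1 := by
      rw [Finset.prod_const, Finset.card_univ, ZMod.card]
      exact Int.units_sq _
    rw [hL, one_mul]
    have : ∀ y : ZMod n, Equiv.Perm.sign (Equiv.addLeft (c y)) = (-1:ℤˣ) ^ (d * y.val / n) := by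
      intro y
      rw [haddsign, hc]
      simp only [ZMod.val_natCast]
      rw [← negOnePow_mod_two]
    rw [Finset.prod_congr rfl (fun y _ => this y), Finset.prod_pow_eq_pow_sum,
      sum_val_zmod n (fun v => d * v / n)]
  -- arithmetic: parity of T
  obtain ⟨e, he⟩ : ∃ e, d = 2 * e + 1 := ⟨d / 2, by omega⟩
  obtain ⟨m, hm⟩ : ∃ m, n = 2 * m := ⟨n / 2, by omega⟩
  set V : ℕ := ∑ v ∈ Finset.range n, v with hV
  have hVm : (∑ v ∈ Finset.range n, d * v % n) = V := by
    rw [hV, ← sum_val_zmod n (fun v => v), ← sum_val_zmod n (fun v => d * v % n)]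
    have hpt : ∀ y : ZMod n, d * y.val % n = (σn y).val := by
      intro y
      rw [hσn, ← ZMod.val_natCast]
      congr 1
      push_cast
      simp [ZMod.natCast_val, ZMod.cast_id]
    rw [Finset.sum_congr rfl (fun y _ => hpt y)]
    exact Equiv.sum_comp σn (fun z => z.val)
  have hkey0 : n * T + (∑ v ∈ Finset.range n, d * v % n) = d * V := by
    rw [hT, hV, Finset.mul_sum, Finset.mul_sum, ← Finset.sum_add_distrib]
    exact Finset.sum_congr rfl (fun v _ => Nat.div_add_mod (d * v) n)
  have hkey : n * T + V = d * V := by rw [hVm] at hkey0; exact hkey0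
  have hV2 : V * 2 = n * (n - 1) := Finset.sum_range_id_mul_two n
  have hVeq : V = m * (n - 1) := by
    have : V * 2 = (m * (n - 1)) * 2 := by rw [hV2, hm]; ring
    omega
  have hnT : n * T = 2 * (e * V) := by
    have h' : d * V = 2 * (e * V) + V := by rw [he]; ring
    omega
  have hmT : m * T = e * V := by
    have h1 : n * T = 2 * (m * T) := by rw [hm]; ring
    omega
  have hTeq : T = e * (n - 1) := by
    have hm0 : 0 < m := by omega
    apply Nat.eq_of_mul_eq_mul_left hm0
    rw [hmT, hVeq]; ring
  have hTpar : T % 2 = e % 2 := by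
    rw [hTeq, Nat.mul_mod, show (n - 1) % 2 = 1 from by omega]
    omega
  have hiff : ((-1:ℤˣ) ^ (e % 2) = -1) ↔ e % 2 = 1 := by
    rcases Nat.mod_two_eq_zero_or_one e with h | h <;> rw [h]
    · simp only [pow_zero]
      exact ⟨fun hc => absurd hc (by decide), fun hc => by omega⟩
    · simp
  rw [hsignτ, negOnePow_mod_two, hTpar, hiff]
  omega

/-- For a prime `p ≡ 1 (mod 4)` and odd `d ≥ 2` with `gcd(d, p-1) = 1`, the
permutation `x ↦ x^d` of `ℤ/pℤ` is odd (has sign `-1`) iff `d ≡ 3 (mod 4)`. -/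
theorem power_map_sign (p : ℕ) [Fact p.Prime] (hp4 : p % 4 = 1)
    (d : ℕ) (hd : 2 ≤ d) (hdodd : Odd d) (hgcd : Nat.gcd d (p - 1) = 1)
    (π : Equiv.Perm (ZMod p)) (hπ : ∀ x : ZMod p, π x = x ^ d) :
    Equiv.Perm.sign π = -1 ↔ d % 4 = 3 := by
  have hp := (Fact.out : p.Prime)
  have hp2 : 2 ≤ p := hp.two_le
  have hp5 : 5 ≤ p := by omega
  have hd0 : d ≠ 0 := by omega
  have hd2 : d % 2 = 1 := Nat.odd_iff.mp hdodd
  have h₁ : ∀ x : ZMod p, x ≠ 0 ↔ π x ≠ 0 := by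
    intro x
    rw [hπ x, Ne, Ne, pow_eq_zero_iff hd0]
  have h₂ : ∀ x : ZMod p, π x ≠ x → x ≠ 0 := by
    intro x hxx hx0
    subst hx0
    exact hxx (by rw [hπ]; exact zero_pow hd0)
  set sp : Equiv.Perm {x : ZMod p // x ≠ 0} := π.subtypePerm (fun x => (h₁ x).symm) with hsp
  have hs1 : Equiv.Perm.sign sp = Equiv.Perm.sign π :=
    Equiv.Perm.sign_subtypePerm π (fun x => (h₁ x).symm) h₂
  set eU : (ZMod p)ˣ ≃ {a : ZMod p // a ≠ 0} := unitsEquivNeZero with heU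
  set up : Equiv.Perm (ZMod p)ˣ := eU.symm.permCongr sp with hupdef
  have hs2 : Equiv.Perm.sign up = Equiv.Perm.sign sp :=
    Equiv.Perm.sign_permCongr eU.symm sp
  have hup : ∀ w : (ZMod p)ˣ, up w = w ^ d := by
    intro w
    apply Units.ext
    show ((eU.symm (sp (eU w)) : (ZMod p)ˣ) : ZMod p) = ((w ^ d : (ZMod p)ˣ) : ZMod p)
    rw [heU, hsp]
    simp [Equiv.Perm.subtypePerm_apply, hπ]
  haveI : IsCyclic (ZMod p)ˣ := inferInstance
  set N : ℕ := Nat.card (ZMod p)ˣ with hNdef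
  have hcard : N = p - 1 := by
    rw [hNdef, Nat.card_eq_fintype_card, ZMod.card_units]
  haveI : NeZero N := ⟨by omega⟩
  set e2 : Multiplicative (ZMod N) ≃* (ZMod p)ˣ :=
    zmodCyclicMulEquiv inferInstance with he2
  set vm : Equiv.Perm (Multiplicative (ZMod N)) := e2.toEquiv.symm.permCongr up with hvmdef
  have hs3 : Equiv.Perm.sign vm = Equiv.Perm.sign up :=
    Equiv.Perm.sign_permCongr e2.toEquiv.symm up
  have hvm : ∀ x, vm x = x ^ d := by
    intro x
    show e2.symm (up (e2 x)) = x ^ d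
    rw [hup, map_pow, MulEquiv.symm_apply_apply]
  set σZ : Equiv.Perm (ZMod N) := Multiplicative.toAdd.permCongr vm with hσZdef
  have hs4 : Equiv.Perm.sign σZ = Equiv.Perm.sign vm :=
    Equiv.Perm.sign_permCongr Multiplicative.toAdd vm
  have hσZ : ∀ x : ZMod N, σZ x = (d : ZMod N) * x := by
    intro x
    show Multiplicative.toAdd (vm (Multiplicative.toAdd.symm x)) = _
    rw [hvm]
    show Multiplicative.toAdd ((Multiplicative.ofAdd x) ^ d) = _
    rw [toAdd_pow, toAdd_ofAdd, nsmul_eq_mul]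
  have hiff := key N ((p-1)/2) d (by omega) (by omega) (by omega) hd2
    (by rw [hcard]; exact hgcd) σZ hσZ
  have hchain : Equiv.Perm.sign σZ = Equiv.Perm.sign π := by
    rw [hs4, hs3, hs2, hs1]
  rw [← hchain]
  exact hiff
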